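/- arXiv:1303.4274 — 2 statements merged into one kernel-verified Lean document; each statement's English description precedes it below -/
import Mathlib

section
/- Let d ≥ 1 and let S_d denote the space of real symmetric d×d matrices equipped with the Loewner order (A ≤ B iff B − A is positive semidefinite). Suppose G : S_d → ℝ is monotone (A ≤ B implies G(A) ≤ G(B)), subadditive (G(A + B) ≤ G(A) + G(B)), and positively homogeneous (G(λA) = λG(A) for all λ ≥ 0). Then there exists a bounded, convex and closed subset Γ of the set S_d⁺ of positive semidefinite symmetric d×d matrices such that G(A) = (1/2) · sup_{γ ∈ Γ} tr(γA) for all A ∈ S_d. -/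
open Matrix Finset

private lemma trace_mul_expand {d : ℕ} (γ B : Matrix (Fin d) (Fin d) ℝ) :
    (γ * B).trace = ∑ i, ∑ j, γ i j * B j i := by
  simp [Matrix.trace, Matrix.mul_apply, Matrix.diag]

private lemma stdBasis_sub_transpose {d : ℕ} (a b : Fin d) :
    ((Matrix.single a b (1:ℝ) - Matrix.single b a 1))ᵀ
      = -(Matrix.single a b (1:ℝ) - Matrix.single b a 1) := by
  ext p q
  simp only [Matrix.transpose_apply, Matrix.sub_apply, Matrix.neg_apply,
    Matrix.single, Matrix.of_apply]
  have e1 : (a = p ∧ b = q) ↔ (b = q ∧ a = p) := and_comm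
  have e2 : (b = p ∧ a = q) ↔ (a = q ∧ b = p) := and_comm
  rw [if_congr e1 rfl rfl, if_congr e2 rfl rfl]
  ring

set_option maxHeartbeats 1000000 in
set_option synthInstance.maxHeartbeats 1000000 in
/-- **Representation of a monotone sublinear function on symmetric matrices.**
If `G` on the space of real symmetric `d × d` matrices (with the Loewner order:
`A ≤ B` iff `B - A` is positive semidefinite) is monotone, subadditive and
positively homogeneous, then there exists a bounded, convex and closed set `Γ`
of positive semidefinite symmetric matrices such that
`G A = (1/2) * sup_{γ ∈ Γ} tr (γ * A)` for every symmetric `A`. -/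
theorem sublinear_monotone_representation
    (d : ℕ) (hd : 1 ≤ d) (G : Matrix (Fin d) (Fin d) ℝ → ℝ)
    (hmono : ∀ A B : Matrix (Fin d) (Fin d) ℝ, A.IsSymm → B.IsSymm →
      (B - A).PosSemidef → G A ≤ G B)
    (hsubadd : ∀ A B : Matrix (Fin d) (Fin d) ℝ, A.IsSymm → B.IsSymm →
      G (A + B) ≤ G A + G B)
    (hhom : ∀ A : Matrix (Fin d) (Fin d) ℝ, A.IsSymm → ∀ l : ℝ, 0 ≤ l →
      G (l • A) = l * G A) :
    ∃ Γ : Set (Matrix (Fin d) (Fin d) ℝ),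
      (∃ C : ℝ, ∀ γ ∈ Γ, ∀ i j, |γ i j| ≤ C) ∧
      Convex ℝ Γ ∧
      IsClosed Γ ∧
      (∀ γ ∈ Γ, γ.PosSemidef) ∧
      ∀ A : Matrix (Fin d) (Fin d) ℝ, A.IsSymm →
        G A = (1 / 2) * sSup ((fun γ => (γ * A).trace) '' Γ) := by
  haveI : NeZero d := ⟨by omega⟩
  -- symmetrization
  set σ : Matrix (Fin d) (Fin d) ℝ → Matrix (Fin d) (Fin d) ℝ :=
    fun A => (1 / 2 : ℝ) • (A + Aᵀ) with hσ
  have hσsymm : ∀ A, (σ A).IsSymm := by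
    intro A
    simp [hσ, Matrix.IsSymm, Matrix.transpose_smul, Matrix.transpose_add, add_comm]
  have hσ_of : ∀ A : Matrix (Fin d) (Fin d) ℝ, A.IsSymm → σ A = A := by
    intro A hA
    rw [Matrix.IsSymm] at hA
    ext i j
    simp [hσ, hA]
    ring
  have hG0 : G 0 = 0 := by
    have := hhom 0 (by simp [Matrix.IsSymm]) 0 le_rfl
    simpa using this
  set N : Matrix (Fin d) (Fin d) ℝ → ℝ := fun A => G (σ A) with hN
  have N_hom : ∀ c : ℝ, 0 < c → ∀ x, N (c • x) = c * N x := by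
    intro c hc x
    have : σ (c • x) = c • σ x := by ext i j; simp [hσ]; ring
    rw [hN]; simp only []
    rw [this, hhom (σ x) (hσsymm x) c hc.le]
  have N_add : ∀ x y, N (x + y) ≤ N x + N y := by
    intro x y
    have : σ (x + y) = σ x + σ y := by ext i j; simp [hσ]; ring
    rw [hN]; simp only []
    rw [this]
    exact hsubadd _ _ (hσsymm x) (hσsymm y)
  have N_symm : ∀ A, A.IsSymm → N A = G A := by
    intro A hA; rw [hN]; simp only []; rw [hσ_of A hA]
  have psd_isSymm : ∀ P : Matrix (Fin d) (Fin d) ℝ, P.PosSemidef → P.IsSymm := by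
    intro P hP
    rw [Matrix.IsSymm, ← conjTranspose_eq_transpose_of_trivial]
    exact hP.1
  have N_neg_psd : ∀ P : Matrix (Fin d) (Fin d) ℝ, P.PosSemidef → N (-P) ≤ 0 := by
    intro P hP
    have hPs := psd_isSymm P hP
    have hnegs : (-P).IsSymm := by rw [Matrix.IsSymm] at hPs ⊢; simp [hPs]
    rw [N_symm _ hnegs, ← hG0]
    exact hmono (-P) 0 hnegs (by simp [Matrix.IsSymm]) (by simpa using hP)
  set Γ : Set (Matrix (Fin d) (Fin d) ℝ) :=
    {γ | ∀ B, (γ * B).trace ≤ 2 * N B} with hΓ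
  -- symmetry of elements of Γ
  have htrE : ∀ (γ : Matrix (Fin d) (Fin d) ℝ) (i j : Fin d),
      (γ * Matrix.single i j 1).trace = γ j i := by
    intro γ i j
    simp [trace_mul_expand, Matrix.single, Matrix.of_apply, ite_and, mul_ite]
  have hΓsymm : ∀ γ ∈ Γ, γ.IsSymm := by
    intro γ hγ
    rw [Matrix.IsSymm]
    ext i j
    have hanti : ∀ a b : Fin d,
        σ ((Matrix.single a b (1:ℝ) : Matrix (Fin d) (Fin d) ℝ) - Matrix.single b a 1) = 0 := by
      intro a b
      show (1 / 2 : ℝ) • (((Matrix.single a b (1:ℝ) : Matrix (Fin d) (Fin d) ℝ)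
          - Matrix.single b a 1)
        + ((Matrix.single a b (1:ℝ) : Matrix (Fin d) (Fin d) ℝ) - Matrix.single b a 1)ᵀ) = 0
      rw [stdBasis_sub_transpose]
      simp
    have h1 := hγ (Matrix.single i j 1 - Matrix.single j i 1)
    have h2 := hγ (Matrix.single j i 1 - Matrix.single i j 1)
    have hB : σ (Matrix.single i j 1 - Matrix.single j i 1) = 0 := hanti i j
    have hB2 : σ (Matrix.single j i 1 - Matrix.single i j 1) = 0 := hanti j i
    rw [Matrix.mul_sub, Matrix.trace_sub, htrE, htrE] at h1 h2
    have e1 : N (Matrix.single i j 1 - Matrix.single j i 1) = 0 := by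
      show G (σ _) = 0
      rw [hB, hG0]
    have e2 : N (Matrix.single j i 1 - Matrix.single i j 1) = 0 := by
      show G (σ _) = 0
      rw [hB2, hG0]
    rw [e1] at h1
    rw [e2] at h2
    rw [Matrix.transpose_apply]
    simp at h1 h2
    linarith [h1, h2]
  have hΓpsd : ∀ γ ∈ Γ, γ.PosSemidef := by
    intro γ hγ
    rw [posSemidef_iff_dotProduct_mulVec]
    constructor
    · rw [Matrix.IsHermitian, conjTranspose_eq_transpose_of_trivial]
      exact hΓsymm γ hγ
    · intro x
      have hP : (vecMulVec x x).PosSemidef := by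
        rw [vecMulVec_eq (Fin 1)]
        have : (replicateCol (Fin 1) x) = (replicateRow (Fin 1) x)ᴴ := by
          ext a b; simp
        rw [this]
        exact posSemidef_conjTranspose_mul_self _
      have h1 := hγ (-(vecMulVec x x))
      have h2 : N (-(vecMulVec x x)) ≤ 0 := N_neg_psd _ hP
      have h3 : (γ * -(vecMulVec x x)).trace = -(γ * vecMulVec x x).trace := by
        simp [Matrix.mul_neg]
      have h4 : 0 ≤ (γ * vecMulVec x x).trace := by
        rw [h3] at h1; linarith
      have hsym := hΓsymm γ hγ
      have hsym' : ∀ p q, γ p q = γ q p := by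
        intro p q
        have := congrFun (congrFun hsym q) p
        simpa using this
      have h5 : (γ * vecMulVec x x).trace = star x ⬝ᵥ γ *ᵥ x := by
        simp only [trace_mul_expand, vecMulVec_apply, dotProduct, mulVec, star_trivial]
        rw [Finset.sum_comm]
        refine Finset.sum_congr rfl fun j _ => ?_
        simp only [dotProduct, Finset.mul_sum]
        refine Finset.sum_congr rfl fun i _ => ?_
        rw [hsym' i j]
        ring
      rw [← h5]; exact h4
  -- boundedness
  have hbound : ∀ γ ∈ Γ, ∀ i j, |γ i j| ≤ 4 * G 1 := by
    intro γ hγ i j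
    have hpsd := hΓpsd γ hγ
    have hsym := hΓsymm γ hγ
    have hdiag : ∀ k, 0 ≤ γ k k := by
      intro k
      have := hpsd.dotProduct_mulVec_nonneg (Pi.single k 1)
      simpa [mulVec_single, single_dotProduct] using this
    have htr : γ.trace ≤ 2 * G 1 := by
      have h1 := hγ 1
      rw [mul_one] at h1
      rwa [N_symm 1 (by simp [Matrix.IsSymm])] at h1
    have hdle : ∀ k, γ k k ≤ 2 * G 1 := by
      intro k
      refine le_trans ?_ htr
      have : γ.trace = ∑ l, γ l l := rfl
      rw [this]
      exact Finset.single_le_sum (fun l _ => hdiag l) (Finset.mem_univ k)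
    have hquad : ∀ c : ℝ, 0 ≤ γ i i + c * γ i j + c * γ j i + c * c * γ j j := by
      intro c
      obtain ⟨u, hu⟩ : ∃ u : Fin d → ℝ, u = Pi.single i 1 := ⟨_, rfl⟩
      obtain ⟨v, hv⟩ : ∃ v : Fin d → ℝ, v = Pi.single j 1 := ⟨_, rfl⟩
      have h0 := hpsd.dotProduct_mulVec_nonneg (u + c • v)
      rw [star_trivial, hu, hv] at h0
      simp only [mulVec_add, mulVec_smul, dotProduct_add, add_dotProduct,
        smul_dotProduct, dotProduct_smul, mulVec_single, single_dotProduct,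
        smul_eq_mul, mul_one, one_mul, MulOpposite.op_one, one_smul, Matrix.col_apply] at h0
      ring_nf at h0 ⊢
      linarith [h0]
    have hji : γ j i = γ i j := by
      have := congrFun (congrFun hsym i) j
      simpa using this
    have h1 := hquad 1
    have h2 := hquad (-1)
    rw [hji] at h1 h2
    have := hdle i; have := hdle j
    rw [abs_le]; constructor <;> nlinarith [hdiag i, hdiag j]
  -- convexity
  have hconv : Convex ℝ Γ := by
    intro γ₁ h1 γ₂ h2 a b ha hb hab
    intro B
    have heq : ((a • γ₁ + b • γ₂) * B).trace
        = a * (γ₁ * B).trace + b * (γ₂ * B).trace := by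
      simp [Matrix.add_mul, Matrix.smul_mul, Matrix.trace_add, Matrix.trace_smul,
        smul_eq_mul]
    rw [heq]
    have e1 := mul_le_mul_of_nonneg_left (h1 B) ha
    have e2 := mul_le_mul_of_nonneg_left (h2 B) hb
    have e3 : a * (2 * N B) + b * (2 * N B) = 2 * N B := by
      rw [← add_mul, hab, one_mul]
    linarith
  -- closedness
  have hclosed : IsClosed Γ := by
    have : Γ = ⋂ B, {γ : Matrix (Fin d) (Fin d) ℝ | (γ * B).trace ≤ 2 * N B} := by
      ext γ; simp [hΓ, Set.mem_iInter]
    rw [this]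
    refine isClosed_iInter fun B => ?_
    exact isClosed_le ((continuous_id.matrix_mul continuous_const).matrix_trace)
      continuous_const
  -- representation via Hahn-Banach
  have hrep : ∀ g : Matrix (Fin d) (Fin d) ℝ →ₗ[ℝ] ℝ, (∀ x, g x ≤ N x) →
      ∃ γ ∈ Γ, ∀ B, (γ * B).trace = 2 * g B := by
    intro g hg
    refine ⟨Matrix.of fun i j => 2 * g (Matrix.single j i 1), ?_, ?_⟩
    · intro B
      have hgB : (Matrix.of (fun i j => 2 * g (Matrix.single j i 1)) * B).trace
          = 2 * g B := by
        conv_rhs => rw [matrix_eq_sum_single B]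
        rw [map_sum, Finset.mul_sum]
        rw [trace_mul_expand, Finset.sum_comm]
        refine Finset.sum_congr rfl fun i _ => ?_
        rw [map_sum, Finset.mul_sum]
        refine Finset.sum_congr rfl fun j _ => ?_
        have : Matrix.single i j (B i j) = B i j • Matrix.single i j 1 := by
          rw [smul_single]; simp
        rw [this, _root_.map_smul, smul_eq_mul, Matrix.of_apply]
        ring
      rw [hgB]
      have := hg B
      linarith
    · intro B
      conv_rhs => rw [matrix_eq_sum_single B]
      rw [map_sum, Finset.mul_sum]
      rw [trace_mul_expand, Finset.sum_comm]
      refine Finset.sum_congr rfl fun i _ => ?_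
      rw [map_sum, Finset.mul_sum]
      refine Finset.sum_congr rfl fun j _ => ?_
      have : Matrix.single i j (B i j) = B i j • Matrix.single i j 1 := by
        rw [smul_single]; simp
      rw [this, _root_.map_smul, smul_eq_mul, Matrix.of_apply]
      ring
  have hkey' : ∀ A : Matrix (Fin d) (Fin d) ℝ, A.IsSymm → A ≠ 0 →
      ∃ γ ∈ Γ, (γ * A).trace = 2 * G A := by
    intro A hA hA0
    set f : Matrix (Fin d) (Fin d) ℝ →ₗ.[ℝ] ℝ := LinearPMap.mkSpanSingleton A (G A) hA0 with hf
    have hfle : ∀ x : f.domain, f x ≤ N x := by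
      rintro ⟨x, hx⟩
      obtain ⟨t, rfl⟩ := Submodule.mem_span_singleton.mp hx
      have happ : f ⟨t • A, hx⟩ = t * G A := by
        have := LinearPMap.mkSpanSingleton'_apply A (G A)
          (fun c hc => (smul_eq_zero.1 hc).elim (fun hc => by rw [hc, RingHom.map_zero, zero_smul])
            fun hx' => absurd hx' hA0) t hx
        exact this.trans (smul_eq_mul ..)
      rw [happ]
      have hsAt : ∀ s : ℝ, (s • A).IsSymm := by
        intro s
        rw [Matrix.IsSymm] at hA ⊢
        rw [Matrix.transpose_smul, hA]
      rcases le_or_gt 0 t with ht | ht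
      · rw [N_symm _ (hsAt t), hhom A hA t ht]
      · rw [N_symm _ (hsAt t)]
        have hsum := hsubadd (t • A) ((-t) • A) (hsAt t) (hsAt (-t))
        have : t • A + (-t) • A = 0 := by
          rw [← add_smul]; simp
        rw [this, hG0, hhom A hA (-t) (by linarith)] at hsum
        linarith
    obtain ⟨g, hg1, hg2⟩ := exists_extension_of_le_sublinear f N N_hom N_add hfle
    have hgA : g A = G A := by
      have hmem : A ∈ Submodule.span ℝ {A} := Submodule.mem_span_singleton_self A
      have h1 := hg1 ⟨A, hmem⟩
      have h2 := LinearPMap.mkSpanSingleton'_apply_self (σ := RingHom.id ℝ) A (G A)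
        (fun c hc => (smul_eq_zero.1 hc).elim (fun hc => by rw [hc, RingHom.map_zero, zero_smul])
          fun hx' => absurd hx' hA0) hmem
      rw [h1]
      exact h2
    obtain ⟨γ, hγΓ, hγrep⟩ := hrep g hg2
    exact ⟨γ, hγΓ, by rw [hγrep A, hgA]⟩
  have hone : (1 : Matrix (Fin d) (Fin d) ℝ) ≠ 0 := by
    intro h
    have := congrFun (congrFun h ⟨0, by omega⟩) ⟨0, by omega⟩
    simp at this
  have hkey : ∀ A : Matrix (Fin d) (Fin d) ℝ, A.IsSymm →
      ∃ γ ∈ Γ, (γ * A).trace = 2 * G A := by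
    intro A hA
    by_cases hA0 : A = 0
    · obtain ⟨γ₀, hγ₀, _⟩ := hkey' 1 (by simp [Matrix.IsSymm]) hone
      refine ⟨γ₀, hγ₀, ?_⟩
      subst hA0
      simp [hG0]
    · exact hkey' A hA hA0
  refine ⟨Γ, ⟨4 * G 1, hbound⟩, hconv, hclosed, hΓpsd, ?_⟩
  intro A hA
  obtain ⟨γ₀, hγ₀Γ, hγ₀⟩ := hkey A hA
  have hub : ∀ y ∈ (fun γ => (γ * A).trace) '' Γ, y ≤ 2 * G A := by
    rintro y ⟨γ, hγ, rfl⟩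
    have := hγ A
    rwa [N_symm A hA] at this
  have hsup : sSup ((fun γ => (γ * A).trace) '' Γ) = 2 * G A := by
    refine le_antisymm (csSup_le ⟨_, ⟨γ₀, hγ₀Γ, rfl⟩⟩ hub) ?_
    rw [← hγ₀]
    exact le_csSup ⟨2 * G A, hub⟩ ⟨γ₀, hγ₀Γ, rfl⟩
  rw [hsup]; ring
end

section
/- Let Φ : ℝ → ℝ satisfy the local Lipschitz condition |Φ(x) − Φ(x′)| ≤ L(1 + |x|^m + |x′|^m)|x − x′| for all x, x′ ∈ ℝ, where L > 0 and m is a positive integer. Let γ denote the standard Gaussian measure on ℝ (mean 0, variance 1) and fix a, b ∈ ℝ. Then there exists a constant L′ > 0, depending only on L, m, a and b, such that the function u(x) = ∫ Φ(x · exp(a + b·y)) dγ(y) satisfies |u(x) − u(x′)| ≤ L′(1 + |x|^m + |x′|^m)|x − x′| for all x, x′ ∈ ℝ. -/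
open MeasureTheory ProbabilityTheory

lemma integrable_exp_mul_gaussian (c : ℝ) :
    Integrable (fun y => Real.exp (c * y)) (gaussianReal 0 1) := by
  rw [gaussianReal_of_var_ne_zero 0 one_ne_zero]
  rw [integrable_withDensity_iff (measurable_gaussianPDF 0 1)
    (Filter.Eventually.of_forall fun x => ENNReal.ofReal_lt_top)]
  have h1 : Integrable (fun y : ℝ => Real.exp (-(1/2 : ℝ) * (y - c) ^ 2)) :=
    (integrable_exp_neg_mul_sq (by norm_num : (0:ℝ) < 1/2)).comp_sub_right c
  have h2 := h1.const_mul (Real.exp (c ^ 2 / 2) * (Real.sqrt (2 * Real.pi))⁻¹)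
  refine h2.congr (Filter.Eventually.of_forall fun y => ?_)
  have hnn : 0 ≤ gaussianPDFReal 0 1 y := gaussianPDFReal_nonneg 0 1 y
  simp only [gaussianPDF, gaussianPDFReal, NNReal.coe_one, mul_one, sub_zero]
  rw [ENNReal.toReal_ofReal (by positivity)]
  have h3 : Real.exp (c ^ 2 / 2) * Real.exp (-(1/2 : ℝ) * (y - c) ^ 2)
      = Real.exp (c * y) * Real.exp (-y ^ 2 / 2) := by
    rw [← Real.exp_add, ← Real.exp_add]
    congr 1
    ring
  calc Real.exp (c ^ 2 / 2) * (Real.sqrt (2 * Real.pi))⁻¹ * Real.exp (-(1/2 : ℝ) * (y - c) ^ 2)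
      = (Real.sqrt (2 * Real.pi))⁻¹ * (Real.exp (c ^ 2 / 2) * Real.exp (-(1/2 : ℝ) * (y - c) ^ 2)) := by ring
    _ = (Real.sqrt (2 * Real.pi))⁻¹ * (Real.exp (c * y) * Real.exp (-y ^ 2 / 2)) := by rw [h3]
    _ = Real.exp (c * y) * ((Real.sqrt (2 * Real.pi))⁻¹ * Real.exp (-y ^ 2 / 2)) := by ring

lemma integrable_exp_pow_gaussian (a b : ℝ) (k : ℕ) :
    Integrable (fun y => (Real.exp (a + b * y)) ^ k) (gaussianReal 0 1) := by
  have h := (integrable_exp_mul_gaussian (k * b)).const_mul (Real.exp (k * a))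
  refine h.congr (Filter.Eventually.of_forall fun y => ?_)
  show Real.exp (↑k * a) * Real.exp (↑k * b * y) = Real.exp (a + b * y) ^ k
  rw [← Real.exp_add, ← Real.exp_nat_mul]
  congr 1
  ring

/-- **The local Lipschitz property propagates under a Gaussian integral.**
If `|Φ x - Φ x'| ≤ L (1 + |x|^m + |x'|^m) |x - x'|` for all `x, x'`, then for
any `a b : ℝ` there is a constant `L' > 0` (depending only on `L, m, a, b`)
such that `u x = ∫ Φ (x * exp (a + b y)) dγ(y)` (with `γ` the standard
Gaussian measure) is well defined and satisfies
`|u x - u x'| ≤ L' (1 + |x|^m + |x'|^m) |x - x'|`. -/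
theorem local_lipschitz_propagation_gaussian
    (Φ : ℝ → ℝ) (L : ℝ) (hL : 0 < L) (m : ℕ) (hm : 1 ≤ m)
    (hΦ : ∀ x x' : ℝ, |Φ x - Φ x'| ≤ L * (1 + |x| ^ m + |x'| ^ m) * |x - x'|)
    (a b : ℝ) :
    ∃ L' > (0 : ℝ),
      (∀ x : ℝ, Integrable (fun y => Φ (x * Real.exp (a + b * y)))
          (gaussianReal 0 1)) ∧
      ∀ x x' : ℝ,
        |(∫ y, Φ (x * Real.exp (a + b * y)) ∂(gaussianReal 0 1)) -
            ∫ y, Φ (x' * Real.exp (a + b * y)) ∂(gaussianReal 0 1)|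
          ≤ L' * (1 + |x| ^ m + |x'| ^ m) * |x - x'| := by
  -- Φ is continuous
  have hΦcont : Continuous Φ := by
    rw [continuous_iff_continuousAt]
    intro x
    rw [ContinuousAt, tendsto_iff_dist_tendsto_zero]
    have hg : Filter.Tendsto (fun x' => L * (1 + |x'| ^ m + |x| ^ m) * |x' - x|)
        (nhds x) (nhds 0) := by
      have : Filter.Tendsto (fun x' => L * (1 + |x'| ^ m + |x| ^ m) * |x' - x|)
          (nhds x) (nhds (L * (1 + |x| ^ m + |x| ^ m) * |x - x|)) := by
        have hcont : Continuous fun x' : ℝ => L * (1 + |x'| ^ m + |x| ^ m) * |x' - x| := by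
          fun_prop
        exact hcont.tendsto x
      simpa using this
    refine squeeze_zero (fun t => dist_nonneg) (fun t => ?_) hg
    rw [Real.dist_eq]
    exact hΦ t x
  set γ := gaussianReal 0 1
  -- abbreviation for the exponential factor
  set g : ℝ → ℝ := fun y => Real.exp (a + b * y) with hg_def
  have hgpos : ∀ y, 0 < g y := fun y => Real.exp_pos _
  have hgint : ∀ k : ℕ, Integrable (fun y => g y ^ k) γ :=
    fun k => integrable_exp_pow_gaussian a b k
  -- the key constant
  set I : ℝ := ∫ y, (g y + g y ^ (m + 1)) ∂γ with hI_def
  have hIint : Integrable (fun y => g y + g y ^ (m + 1)) γ := by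
    have := (hgint 1).add (hgint (m + 1))
    simpa [Pi.add_def] using this
  have hInn : 0 ≤ I :=
    integral_nonneg fun y => by positivity
  -- bound on |Φ t|
  have hΦbound : ∀ t : ℝ, |Φ t| ≤ |Φ 0| + L * (1 + |t| ^ m) * |t| := by
    intro t
    have h := hΦ t 0
    have h0 : |(0:ℝ)| ^ m = 0 := by
      rw [abs_zero]
      exact zero_pow (by omega)
    rw [h0, sub_zero, add_zero] at h
    calc |Φ t| = |Φ t - Φ 0 + Φ 0| := by ring_nf
    _ ≤ |Φ t - Φ 0| + |Φ 0| := abs_add_le _ _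
    _ ≤ L * (1 + |t| ^ m) * |t| + |Φ 0| := by linarith
    _ = |Φ 0| + L * (1 + |t| ^ m) * |t| := by ring
  -- integrability
  have hint : ∀ x : ℝ, Integrable (fun y => Φ (x * g y)) γ := by
    intro x
    refine Integrable.mono' (g := fun y => |Φ 0| + (L * |x|) * g y
        + (L * |x| ^ m * |x|) * g y ^ (m + 1)) ?_ ?_ ?_
    · exact ((integrable_const _).add (((hgint 1).congr
        (Filter.Eventually.of_forall fun y => by simp)).const_mul _)).add
        ((hgint (m + 1)).const_mul _)
    · exact (hΦcont.comp (by fun_prop)).aestronglyMeasurable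
    · refine Filter.Eventually.of_forall fun y => ?_
      have h := hΦbound (x * g y)
      have hxg : |x * g y| = |x| * g y := by
        rw [abs_mul, abs_of_pos (hgpos y)]
      rw [Real.norm_eq_abs]
      have hgy := (hgpos y).le
      calc |Φ (x * g y)| ≤ |Φ 0| + L * (1 + |x * g y| ^ m) * |x * g y| := h
      _ = |Φ 0| + (L * |x|) * g y + (L * |x| ^ m * |x|) * g y ^ (m + 1) := by
          rw [hxg, mul_pow, pow_succ]
          ring
  refine ⟨L * (I + 1), by positivity, hint, ?_⟩
  intro x x'
  rw [← integral_sub (hint x) (hint x')]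
  have key : ∀ y : ℝ, |Φ (x * g y) - Φ (x' * g y)|
      ≤ (L * (1 + |x| ^ m + |x'| ^ m) * |x - x'|) * (g y + g y ^ (m + 1)) := by
    intro y
    have h := hΦ (x * g y) (x' * g y)
    have hgy := hgpos y
    have hxg : |x * g y| = |x| * g y := by rw [abs_mul, abs_of_pos hgy]
    have hx'g : |x' * g y| = |x'| * g y := by rw [abs_mul, abs_of_pos hgy]
    have hsub : |x * g y - x' * g y| = |x - x'| * g y := by
      rw [← sub_mul, abs_mul, abs_of_pos hgy]
    rw [hxg, hx'g, hsub, mul_pow, mul_pow] at h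
    refine h.trans ?_
    have hgm : 0 < g y ^ m := pow_pos hgy m
    have hgm1 : g y ^ (m + 1) = g y ^ m * g y := pow_succ _ _
    have h1 : (0:ℝ) ≤ |x| ^ m := by positivity
    have h2 : (0:ℝ) ≤ |x'| ^ m := by positivity
    have h3 : (0:ℝ) ≤ |x - x'| := abs_nonneg _
    rw [hgm1]
    nlinarith [mul_nonneg (mul_nonneg (mul_nonneg hL.le h3) hgm.le) hgy.le,
      mul_nonneg (mul_nonneg (mul_nonneg hL.le h1) h3) hgy.le,
      mul_nonneg (mul_nonneg (mul_nonneg hL.le h2) h3) hgy.le]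
  calc |∫ y, (Φ (x * g y) - Φ (x' * g y)) ∂γ|
      ≤ ∫ y, |Φ (x * g y) - Φ (x' * g y)| ∂γ := by
        simpa [Real.norm_eq_abs] using
          norm_integral_le_integral_norm (μ := γ) (fun y => Φ (x * g y) - Φ (x' * g y))
    _ ≤ ∫ y, (L * (1 + |x| ^ m + |x'| ^ m) * |x - x'|) * (g y + g y ^ (m + 1)) ∂γ := by
        refine integral_mono ((hint x).sub (hint x')).abs (hIint.const_mul _) key
    _ = (L * (1 + |x| ^ m + |x'| ^ m) * |x - x'|) * I := by
        rw [integral_const_mul]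
    _ ≤ L * (I + 1) * (1 + |x| ^ m + |x'| ^ m) * |x - x'| := by
        have h1 : (0:ℝ) ≤ 1 + |x| ^ m + |x'| ^ m := by positivity
        have h3 : (0:ℝ) ≤ |x - x'| := abs_nonneg _
        nlinarith [mul_nonneg (mul_nonneg hL.le h1) h3]
end
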